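/- arXiv:2305.04723 — 10 statements merged into one kernel-verified Lean document; each statement's English description precedes it below -/
import Mathlib

section
/- New blocks cannot be inserted between two existing blocks of a valid ledger: if l is a valid ledger of length n, i is an index with i + 1 < n, and b is a block such that the list obtained from l by inserting b at position i+1 (i.e., l.take (i+1) ++ [b] ++ l.drop (i+1)) is a valid ledger, then b equals the i-th block of l; hence no block different from all blocks of l can be inserted between two blocks of l while preserving validity. -/
/-- A block is a pair `(prevHash, data)`.  A list of blocks is a valid ledger
(w.r.t. a hash function `h` and a genesis marker `g₀`) if it is nonempty,
the first block's prevHash is `g₀`, and each later block's prevHash is the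
hash of the preceding block. -/
def ValidLedger {α β : Type*} (h : α × β → α) (g₀ : α) (l : List (α × β)) : Prop :=
  ∃ hpos : 0 < l.length,
    (l[0]'hpos).1 = g₀ ∧
    ∀ i : ℕ, ∀ hi : i + 1 < l.length, (l[i + 1]'hi).1 = h (l[i]'(by omega))

/-- Lemma 1.2: a new block cannot be inserted between two existing blocks of a
valid ledger: if inserting `b` at position `i+1` yields a valid ledger, then
`b` is just the `i`-th block of `l`. -/
theorem no_insert_block {α β : Type*} (h : α × β → α)
    (hinj : Function.Injective h) (g₀ : α) (hg : g₀ ∉ Set.range h)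
    (l : List (α × β)) (hl : ValidLedger h g₀ l)
    (i : ℕ) (hi : i + 1 < l.length) (b : α × β)
    (hins : ValidLedger h g₀ (l.take (i + 1) ++ [b] ++ l.drop (i + 1))) :
    b = l[i]'(by omega) := by
  obtain ⟨hpos, _, hchain⟩ := hl
  obtain ⟨hpos', _, hchain'⟩ := hins
  set l' := l.take (i + 1) ++ [b] ++ l.drop (i + 1) with hl'
  have hlen : l'.length = l.length + 1 := by
    simp [hl']; omega
  have htake : (l.take (i+1)).length = i + 1 := by simp; omega
  have hIdx : ∀ j (hj : j ≤ i), l'[j]'(by omega) = l[j]'(by omega) := by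
    intro j hj
    simp only [hl']
    rw [List.getElem_append_left (by simp [htake] <;> omega)]
    rw [List.getElem_append_left (by simp [htake] <;> omega)]
    simp [List.getElem_take]
  have hb : l'[i+1]'(by omega) = b := by
    simp only [hl']
    rw [List.getElem_append_left (by simp [htake] <;> omega)]
    rw [List.getElem_append_right (by simp [htake])]
    simp [htake]
  have hnext : l'[i+2]'(by omega) = l[i+1]'(by omega) := by
    simp only [hl']
    rw [List.getElem_append_right (by simp [htake] <;> omega)]
    simp [htake]
  have h1 := hchain' i (by omega)
  have h2 := hchain' (i+1) (by omega)
  have h3 := hchain i hi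
  rw [hb, hIdx i le_rfl] at h1
  rw [hnext, hb] at h2
  exact hinj (by rw [← h2, h3])
end

section
/- New blocks cannot be prepended to the start of a valid ledger: if l is a valid ledger, then for every block b the list b :: l is not a valid ledger. -/
/-- Lemma 1.3: no block can be prepended to the start of a valid ledger. -/
theorem no_prepend_block {α β : Type*} (h : α × β → α)
    (hinj : Function.Injective h) (g₀ : α) (hg : g₀ ∉ Set.range h)
    (l : List (α × β)) (hl : ValidLedger h g₀ l) (b : α × β) :
    ¬ ValidLedger h g₀ (b :: l) := by
  obtain ⟨hpos, h0, _⟩ := hl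
  rintro ⟨hpos', -, hchain⟩
  have h1 : 0 + 1 < (b :: l).length := by simp [List.length_cons]; omega
  have := hchain 0 h1
  simp at this
  exact hg ⟨b, by rw [← this, h0]⟩
end

section
/- Valid ledgers are append-only: for every valid ledger l, (1) for any data d : β the list l ++ [(h (l.getLast), d)] is a valid ledger (blocks can be appended); (2) for any index i with i + 1 < l.length and any block b, if inserting b at position i+1 yields a valid ledger then b equals the i-th block of l (new blocks cannot be inserted between two blocks); and (3) for every block b the list b :: l is not a valid ledger (blocks cannot be prepended). -/
/-- Theorem 1: valid ledgers are append-only: blocks can be appended, cannot be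
inserted between two existing blocks, and cannot be prepended. -/
theorem ledger_append_only {α β : Type*} (h : α × β → α)
    (hinj : Function.Injective h) (g₀ : α) (hg : g₀ ∉ Set.range h)
    (l : List (α × β)) (hl : ValidLedger h g₀ l) (hne : l ≠ []) :
    (∀ d : β, ValidLedger h g₀ (l ++ [(h (l.getLast hne), d)])) ∧
    (∀ i : ℕ, ∀ hi : i + 1 < l.length, ∀ b : α × β,
      ValidLedger h g₀ (l.take (i + 1) ++ [b] ++ l.drop (i + 1)) →
      b = l[i]'(by omega)) ∧
    (∀ b : α × β, ¬ ValidLedger h g₀ (b :: l)) := by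
  obtain ⟨hpos, h0, hchain⟩ := hl
  refine ⟨?_, ?_, ?_⟩
  · intro d
    refine ⟨by simp, ?_, ?_⟩
    · rw [List.getElem_append_left hpos]; exact h0
    · intro i hi
      simp only [List.length_append, List.length_singleton] at hi
      rcases lt_or_ge (i + 1) l.length with hlt | hge
      · rw [List.getElem_append_left hlt, List.getElem_append_left (by omega)]
        exact hchain i hlt
      · have hie : i + 1 = l.length := by omega
        have : i < l.length := by omega
        rw [List.getElem_append_right (by omega), List.getElem_append_left this]
        simp only [hie, Nat.sub_self, List.getElem_singleton]
        congr 1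
        rw [List.getLast_eq_getElem]
        congr 1
        omega
  · intro i hi b hval
    obtain ⟨hpos', h0', hchain'⟩ := hval
    have hlen : (l.take (i + 1) ++ [b] ++ l.drop (i + 1)).length = l.length + 1 := by
      simp; omega
    have htk : (l.take (i + 1)).length = i + 1 := by simp; omega
    -- l'[i+1] = b
    have hb : (l.take (i + 1) ++ [b] ++ l.drop (i + 1))[i + 1]'(by omega) = b := by
      rw [List.getElem_append_left (by simp [htk])]
      rw [List.getElem_append_right (by omega)]
      simp [htk]
    -- l'[i] = l[i]
    have hli : (l.take (i + 1) ++ [b] ++ l.drop (i + 1))[i]'(by omega) = l[i]'(by omega) := by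
      rw [List.getElem_append_left (by simp [htk])]
      rw [List.getElem_append_left (by omega)]
      exact List.getElem_take ..
    -- l'[i+2] = l[i+1]
    have hli1 : (l.take (i + 1) ++ [b] ++ l.drop (i + 1))[i + 2]'(by omega) = l[i + 1]'hi := by
      rw [List.getElem_append_right (by simp [htk])]
      have : (l.take (i + 1) ++ [b]).length = i + 2 := by simp [htk]
      rw [List.getElem_drop]
      congr 1
      omega
    have e1 : b.1 = h (l[i]'(by omega)) := by
      have := hchain' i (by omega)
      rwa [hb, hli] at this
    have e2 : (l[i + 1]'hi).1 = h b := by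
      have := hchain' (i + 1) (by omega)
      rwa [hli1, hb] at this
    have e3 : (l[i + 1]'hi).1 = h (l[i]'(by omega)) := hchain i hi
    have : h b = h (l[i]'(by omega)) := by rw [← e2, e3]
    exact hinj this
  · intro b hval
    obtain ⟨hpos', h0', hchain'⟩ := hval
    have := hchain' 0 (by simp; omega)
    simp at this
    rw [h0] at this
    exact hg ⟨b, this.symm⟩
end

section
/- A valid ledger contains no duplicate blocks: if l is a valid ledger and i, j < l.length are indices with l.get i = l.get j, then i = j; that is, the map sending an index to the block at that index is injective. -/
/-- A valid ledger contains no duplicate blocks: the map sending an index to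
the block at that index is injective. -/
theorem ledger_no_duplicates {α β : Type*} (h : α × β → α)
    (hinj : Function.Injective h) (g₀ : α) (hg : g₀ ∉ Set.range h)
    (l : List (α × β)) (hl : ValidLedger h g₀ l) :
    Function.Injective l.get := by
  obtain ⟨hpos, hg0, hchain⟩ := hl
  have key : ∀ i j : ℕ, ∀ hi : i < l.length, ∀ hj : j < l.length,
      l[i]'hi = l[j]'hj → i = j := by
    intro i
    induction i with
    | zero =>
      intro j hi hj heq
      cases j with
      | zero => rfl
      | succ k =>
        exfalso
        apply hg
        refine ⟨l[k]'(by omega), ?_⟩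
        rw [← hchain k hj, ← heq, hg0]
    | succ n ih =>
      intro j hi hj heq
      cases j with
      | zero =>
        exfalso
        apply hg
        refine ⟨l[n]'(by omega), ?_⟩
        rw [← hchain n hi, heq, hg0]
      | succ k =>
        have h1 := hchain n hi
        have h2 := hchain k hj
        have : h (l[n]'(by omega)) = h (l[k]'(by omega)) := by
          rw [← h1, ← h2, heq]
        have hnk := ih k (by omega) (by omega) (hinj this)
        omega
  intro a b hab
  apply Fin.ext
  exact key a.1 b.1 a.2 b.2 (by simpa [List.get_eq_getElem] using hab)
end

section
/- In a valid ledger the prevHash fields are pairwise distinct: if l is a valid ledger and i, j < l.length are indices such that the prevHash of the i-th block equals the prevHash of the j-th block, then i = j; in particular each hash value occurs as the prevHash field of at most one block of the ledger. -/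
/-- In a valid ledger the prevHash fields are pairwise distinct: each hash
value occurs as the prevHash field of at most one block. -/
theorem prevHash_pairwise_distinct {α β : Type*} (h : α × β → α)
    (hinj : Function.Injective h) (g₀ : α) (hg : g₀ ∉ Set.range h)
    (l : List (α × β)) (hl : ValidLedger h g₀ l)
    (i j : ℕ) (hi : i < l.length) (hj : j < l.length)
    (heq : (l[i]'hi).1 = (l[j]'hj).1) :
    i = j := by
  obtain ⟨hpos, hg0, hstep⟩ := hl
  induction i using Nat.strong_induction_on generalizing j with
  | _ i ih =>
    match i, j with
    | 0, 0 => rfl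
    | 0, j + 1 =>
      exfalso
      rw [hg0, hstep j (by omega)] at heq
      exact hg ⟨_, heq.symm⟩
    | i + 1, 0 =>
      exfalso
      rw [hg0, hstep i (by omega)] at heq
      exact hg ⟨_, heq⟩
    | i + 1, j + 1 =>
      rw [hstep i (by omega), hstep j (by omega)] at heq
      have := hinj heq
      have : i = j := ih i (by omega) j (by omega) (by omega) (congrArg Prod.fst this)
      omega
end

section
/- A block of a valid ledger determines all earlier blocks: if l and l' are valid ledgers, i < l.length, i < l'.length, and l.get i = l'.get i, then for every j ≤ i one has l.get j = l'.get j. -/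
/-- A block of a valid ledger determines all earlier blocks: if two valid
ledgers agree at index `i`, they agree at every index `j ≤ i`. -/
theorem block_determines_prefix {α β : Type*} (h : α × β → α)
    (hinj : Function.Injective h) (g₀ : α) (hg : g₀ ∉ Set.range h)
    (l l' : List (α × β)) (hl : ValidLedger h g₀ l) (hl' : ValidLedger h g₀ l')
    (i : ℕ) (hi : i < l.length) (hi' : i < l'.length)
    (heq : l[i]'hi = l'[i]'hi') :
    ∀ j : ℕ, ∀ hji : j ≤ i, l[j]'(by omega) = l'[j]'(by omega) := by
  obtain ⟨hp, hg0, hstep⟩ := hl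
  obtain ⟨hp', hg0', hstep'⟩ := hl'
  have key : ∀ k : ℕ, ∀ j : ℕ, j + k = i → ∀ h1 : j < l.length, ∀ h2 : j < l'.length, l[j]'h1 = l'[j]'h2 := by
    intro k
    induction k with
    | zero => intro j hj _ _; subst i; simpa using heq
    | succ k ih =>
      intro j hj hjl hjl'
      have h1 : l[j+1]'(by omega) = l'[j+1]'(by omega) := ih (j+1) (by omega) (by omega) (by omega)
      have h2 := hstep j (by omega)
      have h3 := hstep' j (by omega)
      apply hinj
      rw [← h2, ← h3, h1]
  intro j hji
  exact key (i - j) j (by omega) (by omega) (by omega)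
end

section
/- Blocks of a valid ledger cannot be reordered: if l and l' are valid ledgers and l' is a permutation of l (i.e., l' ~ l as lists), then l' = l; in other words, there is no reordering of the blocks of a valid ledger, other than the identity, that yields a valid ledger. -/
lemma valid_ledger_distinct {α β : Type*} (h : α × β → α)
    (hinj : Function.Injective h) (g₀ : α) (hg : g₀ ∉ Set.range h)
    (l : List (α × β)) (hl : ValidLedger h g₀ l) :
    ∀ i j : ℕ, ∀ hi : i < l.length, ∀ hj : j < l.length,
      l[i]'hi = l[j]'hj → i = j := by
  obtain ⟨hpos, hfst, hchain⟩ := hl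
  intro i
  induction i with
  | zero =>
    intro j hi hj heq
    cases j with
    | zero => rfl
    | succ j' =>
      exfalso
      apply hg
      refine ⟨l[j']'(by omega), ?_⟩
      rw [← hchain j' hj, ← heq, hfst]
  | succ i' ih =>
    intro j hi hj heq
    cases j with
    | zero =>
      exfalso
      apply hg
      refine ⟨l[i']'(by omega), ?_⟩
      rw [← hchain i' hi, heq, hfst]
    | succ j' =>
      have h1 : h (l[i']'(by omega)) = h (l[j']'(by omega)) := by
        rw [← hchain i' hi, ← hchain j' hj, heq]
      have := ih j' (by omega) (by omega) (hinj h1)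
      omega

/-- Lemma 2.1: blocks of a valid ledger cannot be reordered: any permutation of
a valid ledger that is itself a valid ledger is equal to the original ledger. -/
theorem no_reorder_blocks {α β : Type*} (h : α × β → α)
    (hinj : Function.Injective h) (g₀ : α) (hg : g₀ ∉ Set.range h)
    (l l' : List (α × β)) (hl : ValidLedger h g₀ l) (hl' : ValidLedger h g₀ l')
    (hperm : l'.Perm l) :
    l' = l := by
  have hdist := valid_ledger_distinct h hinj g₀ hg l hl
  have hlen : l'.length = l.length := hperm.length_eq
  obtain ⟨hpos, hfst, hchain⟩ := hl
  obtain ⟨hpos', hfst', hchain'⟩ := hl'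
  have key : ∀ i : ℕ, ∀ hi : i < l'.length, l'[i]'hi = l[i]'(by omega) := by
    intro i
    induction i with
    | zero =>
      intro hi
      have hmem : l'[0]'hi ∈ l := hperm.subset (List.getElem_mem hi)
      obtain ⟨j, hj, hje⟩ := List.mem_iff_getElem.mp hmem
      cases j with
      | zero => simpa using hje.symm
      | succ j' =>
        exfalso
        apply hg
        refine ⟨l[j']'(by omega), ?_⟩
        rw [← hchain j' hj, hje, hfst']
    | succ i' ih =>
      intro hi
      have hmem : l'[i'+1]'hi ∈ l := hperm.subset (List.getElem_mem hi)
      obtain ⟨j, hj, hje⟩ := List.mem_iff_getElem.mp hmem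
      cases j with
      | zero =>
        exfalso
        apply hg
        refine ⟨l'[i']'(by omega), ?_⟩
        rw [← hchain' i' hi, ← hje, hfst]
      | succ j' =>
        have h1 : h (l[j']'(by omega)) = h (l'[i']'(by omega)) := by
          rw [← hchain j' hj, hje, hchain' i' hi]
        rw [ih (by omega)] at h1
        have : j' = i' := hdist j' i' (by omega) (by omega) (hinj h1)
        subst this
        exact hje.symm
  exact List.ext_getElem hlen fun i h1 _ => key i h1
end

section
/- Transactions within a block cannot be reordered without changing the Merkle root: for every k, the Merkle root function is injective on lists of length 2^k; that is, if l and l' are lists of transactions of length 2^k with merkleRoot l = merkleRoot l', then l = l'. Consequently, if l' is a permutation of l with l' ≠ l, then merkleRoot l' ≠ merkleRoot l. -/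
/-- Replace each adjacent pair of entries `(x, y)` of a list by `c x y`. -/
def pairUp {α : Type*} (c : α → α → α) : List α → List α
  | x :: y :: rest => c x y :: pairUp c rest
  | _ => []

/-- The Merkle root of a list of length `2 ^ k` (with combining function `c`):
the Merkle root of a one-element list `[a]` is `a`, and the Merkle root of a
list of length `2 ^ (k + 1)` is the Merkle root of the length-`2 ^ k` list
obtained by combining adjacent pairs. -/
def merkleRoot {α : Type*} (c : α → α → α) : ℕ → List α → Option α
  | 0, l => l.head?
  | k + 1, l => merkleRoot c k (pairUp c l)

lemma pairUp_length {α : Type*} (c : α → α → α) :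
    ∀ n (l : List α), l.length = 2 * n → (pairUp c l).length = n := by
  intro n
  induction n with
  | zero => intro l hl; match l with
    | [] => simp [pairUp]
  | succ n ih =>
    intro l hl
    match l with
    | x :: y :: rest =>
      simp only [pairUp, List.length_cons]
      rw [ih rest (by simp at hl; omega)]

lemma pairUp_inj {α : Type*} (c : α → α → α)
    (hc : Function.Injective fun p : α × α => c p.1 p.2) :
    ∀ n (l l' : List α), l.length = 2 * n → l'.length = 2 * n →
      pairUp c l = pairUp c l' → l = l' := by
  intro n
  induction n with
  | zero =>
    intro l l' hl hl' _
    match l, l' with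
    | [], [] => rfl
  | succ n ih =>
    intro l l' hl hl' h
    match l, l' with
    | x :: y :: rest, x' :: y' :: rest' =>
      simp only [pairUp, List.cons.injEq] at h
      have := hc (a₁ := (x, y)) (a₂ := (x', y')) h.1
      simp only [Prod.mk.injEq] at this
      have hr := ih rest rest' (by simp at hl; omega) (by simp at hl'; omega) h.2
      simp [this.1, this.2, hr]

/-- Lemma 2.2: the Merkle root is injective on lists of length `2 ^ k`;
consequently, reordering the transactions of a block (in any nontrivial way)
changes the Merkle root. -/
theorem merkleRoot_injective {α : Type*} (c : α → α → α)
    (hc : Function.Injective fun p : α × α => c p.1 p.2) (k : ℕ) :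
    (∀ l l' : List α, l.length = 2 ^ k → l'.length = 2 ^ k →
      merkleRoot c k l = merkleRoot c k l' → l = l') ∧
    (∀ l l' : List α, l.length = 2 ^ k → l'.Perm l → l' ≠ l →
      merkleRoot c k l' ≠ merkleRoot c k l) := by
  have main : ∀ k, ∀ l l' : List α, l.length = 2 ^ k → l'.length = 2 ^ k →
      merkleRoot c k l = merkleRoot c k l' → l = l' := by
    intro k
    induction k with
    | zero =>
      intro l l' hl hl' h
      match l, l' with
      | [a], [b] => simpa [merkleRoot] using h
    | succ k ih =>
      intro l l' hl hl' h
      have h2 : (2 : ℕ) ^ (k + 1) = 2 * 2 ^ k := by ring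
      exact pairUp_inj c hc (2 ^ k) l l' (by omega) (by omega)
        (ih _ _ (pairUp_length c _ _ (by omega)) (pairUp_length c _ _ (by omega)) h)
  refine ⟨main k, fun l l' hl hp hne heq => hne (main k l' l (hp.length_eq.trans hl) hl heq)⟩
end

section
/- Valid ledgers are tamper-evident: if l is a valid ledger, i is an index with i + 1 < l.length, and b is a block with b ≠ l.get i, then the list obtained from l by replacing the i-th block with b (i.e., l.set i b) is not a valid ledger; any modification of a non-terminal block invalidates the connection to the following block. -/
/-- Theorem 3: valid ledgers are tamper-evident: replacing a non-terminal block
of a valid ledger by a different block yields an invalid ledger. -/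
theorem ledger_tamper_evident {α β : Type*} (h : α × β → α)
    (hinj : Function.Injective h) (g₀ : α) (hg : g₀ ∉ Set.range h)
    (l : List (α × β)) (hl : ValidLedger h g₀ l)
    (i : ℕ) (hi : i + 1 < l.length) (b : α × β) (hb : b ≠ l[i]'(by omega)) :
    ¬ ValidLedger h g₀ (l.set i b) := by
  rintro ⟨hpos, -, hchain⟩
  obtain ⟨hpos', -, hchain'⟩ := hl
  have hi' : i + 1 < (l.set i b).length := by simpa using hi
  have h1 := hchain i hi'
  have h2 : (l.set i b)[i + 1]'hi' = l[i + 1]'hi := by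
    rw [List.getElem_set_ne (by omega)]
  have h3 : (l.set i b)[i]'(by omega) = b := by
    rw [List.getElem_set_self]
  rw [h2, h3, hchain' i hi] at h1
  exact hb (hinj h1.symm)
end

section
/- Modifying one block of a valid ledger forces modification of every subsequent block: if l and l' are valid ledgers of the same length n, and i < n is an index with l.get i ≠ l'.get i, then for every j with i ≤ j < n one has l.get j ≠ l'.get j; consequently the number of indices at which l and l' differ is at least n - i. -/
open Classical

/-- Core of Lemma 4.2: if two valid ledgers of the same length `n` differ at
index `i`, then they differ at every index `j` with `i ≤ j < n`; consequently
the number of indices at which they differ is at least `n - i`. -/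
theorem tamper_requires_linear_changes {α β : Type*} (h : α × β → α)
    (hinj : Function.Injective h) (g₀ : α) (hg : g₀ ∉ Set.range h)
    (l l' : List (α × β)) (hl : ValidLedger h g₀ l) (hl' : ValidLedger h g₀ l')
    (hlen : l.length = l'.length)
    (i : ℕ) (hi : i < l.length) (hne : l[i]'hi ≠ l'[i]'(by omega)) :
    (∀ j : ℕ, ∀ hij : i ≤ j, ∀ hj : j < l.length,
      l[j]'hj ≠ l'[j]'(by omega)) ∧
    l.length - i ≤ ((Finset.range l.length).filter (fun j => l[j]? ≠ l'[j]?)).card := by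
  obtain ⟨hpos, h0, hstep⟩ := hl
  obtain ⟨hpos', h0', hstep'⟩ := hl'
  have key : ∀ j : ℕ, ∀ hij : i ≤ j, ∀ hj : j < l.length,
      l[j]'hj ≠ l'[j]'(by omega) := by
    intro j
    induction j with
    | zero =>
      intro hij hj
      interval_cases i
      exact hne
    | succ k ih =>
      intro hij hj
      rcases Nat.lt_or_ge i (k + 1) with hlt | hge
      · have hk : k < l.length := by omega
        have hkne := ih (by omega) hk
        intro heq
        have h1 : (l[k + 1]'hj).1 = h (l[k]'hk) := hstep k hj
        have h2 : (l'[k + 1]'(by omega)).1 = h (l'[k]'(by omega)) := hstep' k (by omega)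
        apply hkne
        apply hinj
        rw [← h1, ← h2, heq]
      · have : i = k + 1 := by omega
        subst this
        exact hne
  refine ⟨key, ?_⟩
  have hsub : Finset.Ico i l.length ⊆
      (Finset.range l.length).filter (fun j => l[j]? ≠ l'[j]?) := by
    intro j hj
    simp only [Finset.mem_Ico] at hj
    simp only [Finset.mem_filter, Finset.mem_range]
    refine ⟨hj.2, ?_⟩
    rw [List.getElem?_eq_getElem hj.2, List.getElem?_eq_getElem (by omega)]
    simp only [ne_eq, Option.some_inj]
    exact key j hj.1 hj.2
  calc l.length - i = (Finset.Ico i l.length).card := (Nat.card_Ico i l.length).symm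
    _ ≤ _ := Finset.card_le_card hsub
end
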